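/- Let W = ⟨S|M⟩ be a finite rank Coxeter system and let I ⊆ S be such that for each i either C_i ⊆ I or C_i ∩ I = ∅. Then ψ_I is proper (i.e. for every N ∈ ℝ the set {w ∈ W : ψ_I(w) ≤ N} is finite) if and only if the subgroup of W generated by S ∖ I is finite. -/

import Mathlib

open CoxeterSystem

/-- The graph `Graph'_S(W)` on the generators, with an edge `{s_i, s_j}` whenever
`3 ≤ m_{i,j} < ∞` (in the `CoxeterMatrix` encoding `0` stands for `∞`, so this is
`3 ≤ M i j`). -/
def finGraph {B : Type*} (M : CoxeterMatrix B) : SimpleGraph B where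
  Adj x y := x ≠ y ∧ 3 ≤ M x y
  symm := by
    constructor
    intro x y h
    exact ⟨h.1.symm, M.symmetric x y ▸ h.2⟩
  loopless := by
    constructor
    intro x h
    exact h.1 rfl

/-- Auxiliary increasing family of sets: `chainSet Hs Ss k` consists of alternating
products `h₀ * t₁ * h₁ * ⋯ * t_k * h_k` with `h_i ∈ Hs`, `t_i ∈ Ss` (built from the left). -/
def chainSet {W : Type*} [Group W] (Hs Ss : Set W) : ℕ → Set W
  | 0 => Hs
  | (k+1) => chainSet Hs Ss k ∪ Set.image2 (· * ·) (Set.image2 (· * ·) Hs Ss) (chainSet Hs Ss k)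

lemma chainSet_finite {W : Type*} [Group W] {Hs Ss : Set W} (hH : Hs.Finite) (hS : Ss.Finite) :
    ∀ k, (chainSet Hs Ss k).Finite := by
  intro k
  induction k with
  | zero => exact hH
  | succ k ih => exact ih.union (Set.Finite.image2 _ (hH.image2 _ hS) ih)

lemma countP_mem_add_countP_not_mem {B : Type*} [DecidableEq B] (I : Finset B) (ω : List B) :
    ω.countP (fun i => decide (i ∈ I)) + ω.countP (fun i => !decide (i ∈ I)) = ω.length := by
  induction ω with
  | nil => simp
  | cons b t iht =>
    by_cases hb : b ∈ I <;>
      simp only [List.countP_cons, List.length_cons, hb, decide_true,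
        decide_false, decide_eq_true_eq] <;> simp [hb] <;> omega

lemma chainSet_mono {W : Type*} [Group W] (Hs Ss : Set W) :
    Monotone (chainSet Hs Ss) := by
  apply monotone_nat_of_le_succ
  intro k
  exact Set.subset_union_left

theorem weighted_length_proper_iff_finite_subgroup
    {B : Type*} [Fintype B] [DecidableEq B] {M : CoxeterMatrix B}
    {W : Type*} [Group W] (cs : CoxeterSystem M W)
    (I : Finset B)
    (hcomp : ∀ i j : B, (finGraph M).Reachable i j → (i ∈ I ↔ j ∈ I))
    (ψ : W → ℝ)
    (hψ : ∀ ω : List B, cs.IsReduced ω →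
      ψ (cs.wordProd ω) = (ω.countP (fun i => decide (i ∈ I)) : ℝ)) :
    (∀ N : ℝ, {w : W | ψ w ≤ N}.Finite) ↔
      ((Subgroup.closure (cs.simple '' {i : B | i ∉ I}) : Set W)).Finite := by
  classical
  set H : Subgroup W := Subgroup.closure (cs.simple '' {i : B | i ∉ I}) with hHdef
  constructor
  · -- properness → H finite
    intro hproper
    -- the retraction θ : W → W killing the simples in I
    have hf : M.IsLiftable (fun i => if i ∈ I then (1 : W) else cs.simple i) := by
      intro i j
      have key : ∀ i j : B, i ∈ I → j ∉ I → cs.simple j ^ M i j = 1 := by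
        intro i j hi hj
        have hne : i ≠ j := fun h => hj (h ▸ hi)
        have hnadj : ¬ (finGraph M).Adj i j := by
          intro hadj
          exact hj ((hcomp i j hadj.reachable).mp hi)
        have h3 : ¬ 3 ≤ M.M i j := fun h => hnadj ⟨hne, h⟩
        have h1 : M.M i j ≠ 1 := M.off_diagonal i j hne
        interval_cases h : M.M i j
        · simp
        · exact absurd rfl h1
        · rw [pow_two]
          exact cs.simple_mul_simple_self j
      by_cases hi : i ∈ I <;> by_cases hj : j ∈ I <;> simp only [hi, hj, if_pos, if_neg,
        if_true, if_false, ite_true, ite_false, one_mul, mul_one]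
      · exact one_pow _
      · exact key i j hi hj
      · have := key j i hj hi
        rw [M.symmetric i j]  -- obtain exponent M j i
        exact this
      · exact cs.simple_mul_simple_pow i j
    set θ : W →* W := cs.lift ⟨_, hf⟩ with hθdef
    have hθs : ∀ i : B, θ (cs.simple i) = if i ∈ I then 1 else cs.simple i := fun i =>
      cs.lift_apply_simple hf i
    -- θ applied to a word product is the word product of the filtered word
    have hθπ : ∀ ω : List B, θ (cs.wordProd ω)
        = cs.wordProd (ω.filter (fun i => !decide (i ∈ I))) := by
      intro ω
      induction ω with
      | nil => simp
      | cons b t ih =>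
        rw [cs.wordProd_cons, map_mul, hθs, ih]
        by_cases hb : b ∈ I
        · simp [hb]
        · simp [hb, cs.wordProd_cons]
    -- θ fixes every element of H
    have hθH : ∀ w ∈ H, θ w = w := by
      intro w hw
      induction hw using Subgroup.closure_induction with
      | mem x hx =>
        obtain ⟨i, hi, rfl⟩ := hx
        rw [hθs]
        simp [Set.mem_setOf_eq.mp hi]
      | one => simp
      | mul x y hx hy ihx ihy => rw [map_mul, ihx, ihy]
      | inv x hx ihx => rw [map_inv, ihx]
    -- H ⊆ {ψ ≤ 0}
    apply (hproper 0).subset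
    intro w hw
    obtain ⟨ω, hred, rfl⟩ := cs.exists_reduced_word' w
    have hψw := hψ ω hred
    have hcount : ω.countP (fun i => decide (i ∈ I)) = 0 := by
      have hlen : cs.length (cs.wordProd ω) = ω.length := hred
      have h1 : θ (cs.wordProd ω) = cs.wordProd ω := hθH _ hw
      have h2 : cs.length (cs.wordProd (ω.filter (fun i => !decide (i ∈ I))))
          ≤ (ω.filter (fun i => !decide (i ∈ I))).length := cs.length_wordProd_le _
      rw [← hθπ, h1, hlen] at h2
      have h3 : (ω.filter (fun i => !decide (i ∈ I))).length
          = ω.countP (fun i => !decide (i ∈ I)) := List.countP_eq_length_filter.symm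
      have h4 := countP_mem_add_countP_not_mem I ω
      omega
    simp [hψw, hcount]
  · -- H finite → properness
    intro hHfin N
    set Ss : Set W := cs.simple '' (I : Set B) with hSs
    have hSfin : Ss.Finite := (I.finite_toSet).image _
    -- multiplication by a non-I simple preserves each chainSet level
    have hmul : ∀ k (b : B), b ∉ I → ∀ x ∈ chainSet (H : Set W) Ss k,
        cs.simple b * x ∈ chainSet (H : Set W) Ss k := by
      intro k
      induction k with
      | zero =>
        intro b hb x hx
        exact H.mul_mem (Subgroup.subset_closure ⟨b, hb, rfl⟩) hx
      | succ k ih =>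
        intro b hb x hx
        rcases hx with hx | hx
        · exact Or.inl (ih b hb x hx)
        · obtain ⟨y, hy, z, hz, rfl⟩ := hx
          obtain ⟨h, hh, t, ht, rfl⟩ := hy
          refine Or.inr ?_
          have : cs.simple b * (h * t * z) = ((cs.simple b * h) * t) * z := by group
          rw [this]
          exact Set.mem_image2_of_mem
            (Set.mem_image2_of_mem (H.mul_mem (Subgroup.subset_closure ⟨b, hb, rfl⟩) hh) ht) hz
    -- every word product lies in the appropriate chainSet level
    have key : ∀ ω : List B,
        cs.wordProd ω ∈ chainSet (H : Set W) Ss (ω.countP (fun i => decide (i ∈ I))) := by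
      intro ω
      induction ω with
      | nil =>
        show (1 : W) ∈ chainSet (H : Set W) Ss 0
        exact H.one_mem
      | cons b t ih =>
        rw [cs.wordProd_cons]
        by_cases hb : b ∈ I
        · have hc : (b :: t).countP (fun i => decide (i ∈ I))
              = t.countP (fun i => decide (i ∈ I)) + 1 := by
            simp [List.countP_cons, hb]
          rw [hc]
          refine Or.inr ?_
          have : cs.simple b * cs.wordProd t = ((1 : W) * cs.simple b) * cs.wordProd t := by
            group
          rw [this]
          exact Set.mem_image2_of_mem
            (Set.mem_image2_of_mem H.one_mem ⟨b, hb, rfl⟩) ih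
        · have hc : (b :: t).countP (fun i => decide (i ∈ I))
              = t.countP (fun i => decide (i ∈ I)) := by
            simp [List.countP_cons, hb]
          rw [hc]
          exact hmul _ b hb _ ih
    -- conclude
    apply (chainSet_finite hHfin hSfin ⌊N⌋₊).subset
    intro w hw
    obtain ⟨ω, hred, rfl⟩ := cs.exists_reduced_word' w
    have hψw := hψ ω hred
    have hle : (ω.countP (fun i => decide (i ∈ I)) : ℝ) ≤ N := by
      rw [← hψw]; exact hw
    have hfl : ω.countP (fun i => decide (i ∈ I)) ≤ ⌊N⌋₊ := Nat.le_floor hle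
    exact chainSet_mono _ _ hfl (key ω)
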